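/- Fix x, x' ∈ ℝ^d and 1 ≤ b ≤ n. Then E_I[ ‖(1/b) ∑_{i∈I} (∇f_i(x) − ∇f_i(x')) − (∇f(x) − ∇f(x'))‖² ] ≤ (L²/b) ‖x − x'‖², where E_I is the expectation over a uniformly random size-b minibatch. -/

import Mathlib

noncomputable section

open Finset

/-- The average function `f = (1/n) ∑ᵢ fᵢ`. -/
noncomputable def avgF {d n : ℕ} (f : Fin n → EuclideanSpace ℝ (Fin d) → ℝ) :
    EuclideanSpace ℝ (Fin d) → ℝ :=
  fun z => (n : ℝ)⁻¹ * ∑ i, f i z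

/-- Expectation (average) of a real-valued function of a uniformly random
size-`b` subset of `{1,…,n}`. -/
noncomputable def expSub (n b : ℕ) (g : Finset (Fin n) → ℝ) : ℝ :=
  (∑ I ∈ Finset.powersetCard b (Finset.univ : Finset (Fin n)), g I) /
    ((Finset.powersetCard b (Finset.univ : Finset (Fin n))).card : ℝ)

/-- Number of `b`-subsets of a fintype containing a fixed subset `s`. -/
theorem count_subsets {α : Type*} [Fintype α] [DecidableEq α] (s : Finset α) (b : ℕ)
    (hs : s.card ≤ b) :
    ((Finset.powersetCard b (univ : Finset α)).filter (fun I => s ⊆ I)).card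
      = (Fintype.card α - s.card).choose (b - s.card) := by
  have h1 : (univ \ s).card = Fintype.card α - s.card := by
    rw [Finset.card_sdiff_of_subset (subset_univ s), Finset.card_univ]
  rw [← h1, ← Finset.card_powersetCard (b - s.card) (univ \ s)]
  apply Finset.card_bij' (fun I _ => I \ s) (fun J _ => J ∪ s)
  · intro I hI
    simp only [mem_filter, mem_powersetCard] at hI
    rw [mem_powersetCard]
    refine ⟨fun a ha => ?_, ?_⟩
    · rw [mem_sdiff] at ha ⊢; exact ⟨mem_univ a, ha.2⟩
    · rw [Finset.card_sdiff_of_subset hI.2, hI.1.2]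
  · intro J hJ
    rw [mem_powersetCard] at hJ
    have hdisj : Disjoint J s := by
      intro t htJ hts a ha
      have := hJ.1 (htJ ha)
      rw [mem_sdiff] at this
      exact absurd (hts ha) this.2
    simp only [mem_filter, mem_powersetCard]
    refine ⟨⟨subset_univ _, ?_⟩, subset_union_right⟩
    rw [Finset.card_union_of_disjoint hdisj, hJ.2]
    omega
  · intro I hI
    simp only [mem_filter, mem_powersetCard] at hI
    exact Finset.sdiff_union_of_subset hI.2
  · intro J hJ
    rw [mem_powersetCard] at hJ
    have hdisj : Disjoint J s := by
      intro t htJ hts a ha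
      have := hJ.1 (htJ ha)
      rw [mem_sdiff] at this
      exact absurd (hts ha) this.2
    rw [Finset.union_sdiff_right, Finset.sdiff_eq_self_of_disjoint hdisj]

variable {E : Type*} [NormedAddCommGroup E] [InnerProductSpace ℝ E]

theorem norm_sq_sum_expand {n : ℕ} (I : Finset (Fin n)) (h : Fin n → E) :
    ‖∑ i ∈ I, h i‖ ^ 2
      = ∑ i, ∑ j, (if i ∈ I ∧ j ∈ I then (inner ℝ (h i) (h j) : ℝ) else 0) := by
  rw [← real_inner_self_eq_norm_sq, sum_inner]
  calc (∑ i ∈ I, (inner ℝ (h i) (∑ j ∈ I, h j) : ℝ))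
      = ∑ i ∈ I, ∑ j ∈ I, (inner ℝ (h i) (h j) : ℝ) := by
        refine Finset.sum_congr rfl fun i _ => ?_; rw [inner_sum]
    _ = ∑ i, ∑ j, (if i ∈ I ∧ j ∈ I then (inner ℝ (h i) (h j) : ℝ) else 0) := by
        rw [eq_comm]
        calc ∑ i, ∑ j, (if i ∈ I ∧ j ∈ I then (inner ℝ (h i) (h j) : ℝ) else 0)
            = ∑ i, (if i ∈ I then ∑ j, (if j ∈ I then (inner ℝ (h i) (h j) : ℝ) else 0) else 0) := by
              refine Finset.sum_congr rfl fun i _ => ?_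
              by_cases hi : i ∈ I <;> simp [hi]
          _ = ∑ i ∈ univ ∩ I, ∑ j ∈ univ ∩ I, (inner ℝ (h i) (h j) : ℝ) := by
              rw [Finset.sum_ite_mem]
              exact Finset.sum_congr rfl fun i _ => by rw [Finset.sum_ite_mem]
          _ = ∑ i ∈ I, ∑ j ∈ I, (inner ℝ (h i) (h j) : ℝ) := by rw [Finset.univ_inter]

/-- key combinatorial identity -/
theorem sum_over_batches {n b : ℕ} (h : Fin n → E) (hsum : ∑ i, h i = 0)
    (A B : ℝ) (hcard : ∀ i j : Fin n,
      (((Finset.powersetCard b (univ : Finset (Fin n))).filter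
        (fun I => i ∈ I ∧ j ∈ I)).card : ℝ) = if i = j then A else B) :
    ∑ I ∈ Finset.powersetCard b (univ : Finset (Fin n)), ‖∑ i ∈ I, h i‖ ^ 2
      = (A - B) * ∑ i, ‖h i‖ ^ 2 := by
  calc ∑ I ∈ Finset.powersetCard b (univ : Finset (Fin n)), ‖∑ i ∈ I, h i‖ ^ 2
      = ∑ I ∈ Finset.powersetCard b (univ : Finset (Fin n)),
          ∑ i, ∑ j, (if i ∈ I ∧ j ∈ I then (inner ℝ (h i) (h j) : ℝ) else 0) := by
        exact Finset.sum_congr rfl fun I _ => norm_sq_sum_expand I h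
    _ = ∑ i, ∑ j, ∑ I ∈ Finset.powersetCard b (univ : Finset (Fin n)),
          (if i ∈ I ∧ j ∈ I then (inner ℝ (h i) (h j) : ℝ) else 0) := by
        rw [Finset.sum_comm]
        exact Finset.sum_congr rfl fun i _ => Finset.sum_comm
    _ = ∑ i, ∑ j, (if i = j then A else B) * (inner ℝ (h i) (h j) : ℝ) := by
        refine Finset.sum_congr rfl fun i _ => Finset.sum_congr rfl fun j _ => ?_
        rw [Finset.sum_ite, Finset.sum_const, Finset.sum_const_zero, add_zero,
          nsmul_eq_mul, hcard i j]
    _ = ∑ i, (B * ∑ j, (inner ℝ (h i) (h j) : ℝ)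
          + (A - B) * (inner ℝ (h i) (h i) : ℝ)) := by
        refine Finset.sum_congr rfl fun i _ => ?_
        have hsplit : ∀ j, (if i = j then A else B) * (inner ℝ (h i) (h j) : ℝ)
            = B * (inner ℝ (h i) (h j) : ℝ)
              + (if i = j then (A - B) * (inner ℝ (h i) (h j) : ℝ) else 0) := by
          intro j; by_cases hij : i = j
          · simp [hij]; ring
          · simp [hij]
        rw [Finset.sum_congr rfl (fun j _ => hsplit j), Finset.sum_add_distrib,
          Finset.sum_ite_eq, if_pos (Finset.mem_univ i), Finset.mul_sum]
    _ = (A - B) * ∑ i, ‖h i‖ ^ 2 := by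
        rw [Finset.mul_sum]
        refine Finset.sum_congr rfl fun i _ => ?_
        rw [← inner_sum, hsum, inner_zero_right, mul_zero, zero_add,
          real_inner_self_eq_norm_sq]

/-- variance is at most second moment -/
theorem sum_sq_dev_le {n : ℕ} (g : Fin n → E) :
    ∑ i, ‖g i - (n : ℝ)⁻¹ • ∑ j, g j‖ ^ 2 ≤ ∑ i, ‖g i‖ ^ 2 := by
  rcases Nat.eq_zero_or_pos n with hn | hn
  · subst hn; simp
  set S := ∑ j, g j with hS
  have hexp : ∀ i, ‖g i - (n : ℝ)⁻¹ • S‖ ^ 2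
      = ‖g i‖ ^ 2 - 2 * ((n:ℝ)⁻¹ * inner ℝ (g i) S) + (n:ℝ)⁻¹ ^ 2 * ‖S‖ ^ 2 := by
    intro i
    rw [norm_sub_sq_real, real_inner_smul_right, norm_smul]
    have : ‖(n:ℝ)⁻¹‖ = (n:ℝ)⁻¹ := Real.norm_of_nonneg (by positivity)
    rw [this, mul_pow]
  have hS2 : ∑ i, (inner ℝ (g i) S : ℝ) = ‖S‖ ^ 2 := by
    rw [← sum_inner, ← hS, real_inner_self_eq_norm_sq]
  have hn' : (0:ℝ) < n := by exact_mod_cast hn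
  calc ∑ i, ‖g i - (n : ℝ)⁻¹ • S‖ ^ 2
      = ∑ i, ‖g i‖ ^ 2 - 2 * ((n:ℝ)⁻¹ * ‖S‖ ^ 2) + (n:ℝ) * ((n:ℝ)⁻¹ ^ 2 * ‖S‖ ^ 2) := by
        simp only [hexp]
        rw [Finset.sum_add_distrib, Finset.sum_sub_distrib, Finset.sum_const,
          Finset.card_univ, Fintype.card_fin, ← Finset.mul_sum, ← Finset.mul_sum, hS2]
        ring
    _ = ∑ i, ‖g i‖ ^ 2 - (n:ℝ)⁻¹ * ‖S‖ ^ 2 := by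
        field_simp; ring
    _ ≤ ∑ i, ‖g i‖ ^ 2 := by
        have : (0:ℝ) ≤ (n:ℝ)⁻¹ * ‖S‖ ^ 2 := by positivity
        linarith

theorem grad_avgF {d n : ℕ} (f : Fin n → EuclideanSpace ℝ (Fin d) → ℝ)
    (hdiff : ∀ i, Differentiable ℝ (f i)) (z : EuclideanSpace ℝ (Fin d)) :
    gradient (avgF f) z = (n : ℝ)⁻¹ • ∑ i, gradient (f i) z := by
  have hsum : DifferentiableAt ℝ (fun z => ∑ i, f i z) z :=
    DifferentiableAt.fun_sum (fun i _ => (hdiff i).differentiableAt)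
  have h1 : fderiv ℝ (avgF f) z = (n:ℝ)⁻¹ • ∑ i, fderiv ℝ (f i) z := by
    unfold avgF
    rw [fderiv_const_mul hsum]
    congr 1
    exact fderiv_fun_sum (fun i _ => (hdiff i).differentiableAt)
  unfold gradient
  rw [h1, map_smul, map_sum]

/-- Variance bound for the minibatch gradient difference:
`E_I‖(1/b)∑_{i∈I}(∇fᵢ(x) − ∇fᵢ(x')) − (∇f(x) − ∇f(x'))‖² ≤ (L²/b)‖x − x'‖²`. -/
theorem minibatch_difference_variance {d n : ℕ} (hd : 1 ≤ d) (hn : 1 ≤ n)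
    (L : ℝ) (hL : 0 < L)
    (f : Fin n → EuclideanSpace ℝ (Fin d) → ℝ)
    (hdiff : ∀ i, Differentiable ℝ (f i))
    (hsmooth : ∀ i (x y : EuclideanSpace ℝ (Fin d)),
      ‖gradient (f i) x - gradient (f i) y‖ ≤ L * ‖x - y‖)
    (x x' : EuclideanSpace ℝ (Fin d))
    (b : ℕ) (hb1 : 1 ≤ b) (hbn : b ≤ n) :
    expSub n b (fun I =>
        ‖(b : ℝ)⁻¹ • ∑ i ∈ I, (gradient (f i) x - gradient (f i) x')
          - (gradient (avgF f) x - gradient (avgF f) x')‖ ^ 2)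
      ≤ L ^ 2 / (b : ℝ) * ‖x - x'‖ ^ 2 := by
  set g : Fin n → EuclideanSpace ℝ (Fin d) := fun i => gradient (f i) x - gradient (f i) x' with hg
  set gbar : EuclideanSpace ℝ (Fin d) := (n : ℝ)⁻¹ • ∑ i, g i with hgbar
  have hbpos : (0:ℝ) < b := by exact_mod_cast hb1
  have hnpos : (0:ℝ) < n := by exact_mod_cast hn
  -- gradient of average
  have hgradavg : gradient (avgF f) x - gradient (avgF f) x' = gbar := by
    rw [grad_avgF f hdiff x, grad_avgF f hdiff x', hgbar, ← smul_sub, ← Finset.sum_sub_distrib]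
  -- the deviation vectors
  set h : Fin n → EuclideanSpace ℝ (Fin d) := fun i => g i - gbar with hh
  have hsum0 : ∑ i, h i = 0 := by
    simp only [hh, Finset.sum_sub_distrib, Finset.sum_const, Finset.card_univ, Fintype.card_fin]
    rw [sub_eq_zero, hgbar, ← Nat.cast_smul_eq_nsmul ℝ, smul_smul,
      mul_inv_cancel₀ (ne_of_gt hnpos), one_smul]
  -- rewrite each summand
  have hsummand : ∀ I ∈ Finset.powersetCard b (Finset.univ : Finset (Fin n)),
      ‖(b : ℝ)⁻¹ • ∑ i ∈ I, g i - gbar‖ ^ 2 = (b:ℝ)⁻¹ ^ 2 * ‖∑ i ∈ I, h i‖ ^ 2 := by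
    intro I hI
    rw [Finset.mem_powersetCard] at hI
    have hval : (b : ℝ)⁻¹ • ∑ i ∈ I, g i - gbar = (b:ℝ)⁻¹ • ∑ i ∈ I, h i := by
      simp only [hh, Finset.sum_sub_distrib, Finset.sum_const, hI.2, smul_sub]
      rw [← Nat.cast_smul_eq_nsmul ℝ, smul_smul, inv_mul_cancel₀ (ne_of_gt hbpos), one_smul]
    rw [hval, norm_smul, Real.norm_of_nonneg (by positivity), mul_pow]
  -- the counting
  set A : ℝ := (((n-1).choose (b-1) : ℕ) : ℝ) with hA
  set B : ℝ := (if b = 1 then 0 else (((n-2).choose (b-2) : ℕ) : ℝ)) with hB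
  have hcard : ∀ i j : Fin n,
      (((Finset.powersetCard b (univ : Finset (Fin n))).filter
        (fun I => i ∈ I ∧ j ∈ I)).card : ℝ) = if i = j then A else B := by
    intro i j
    by_cases hij : i = j
    · subst hij
      rw [if_pos rfl, hA]
      have hfeq : (Finset.powersetCard b (univ : Finset (Fin n))).filter
            (fun I => i ∈ I ∧ i ∈ I)
          = (Finset.powersetCard b (univ : Finset (Fin n))).filter
            (fun I => ({i} : Finset (Fin n)) ⊆ I) := by
        apply Finset.filter_congr; intro I _; simp
      have hc := count_subsets ({i} : Finset (Fin n)) b (by simpa using hb1)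
      rw [Finset.card_singleton, Fintype.card_fin] at hc
      rw [hfeq, hc]
    · rw [if_neg hij, hB]
      by_cases hb2 : 2 ≤ b
      · rw [if_neg (by omega : ¬ b = 1)]
        have hfeq : (Finset.powersetCard b (univ : Finset (Fin n))).filter
              (fun I => i ∈ I ∧ j ∈ I)
            = (Finset.powersetCard b (univ : Finset (Fin n))).filter
              (fun I => ({i, j} : Finset (Fin n)) ⊆ I) := by
          apply Finset.filter_congr; intro I _; simp [Finset.insert_subset_iff]
        have hc := count_subsets ({i, j} : Finset (Fin n)) b
          (by rw [Finset.card_pair hij]; exact hb2)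
        rw [Finset.card_pair hij, Fintype.card_fin] at hc
        rw [hfeq, hc]
      · have hb1' : b = 1 := by omega
        rw [if_pos hb1']
        have hempty : (Finset.powersetCard b (univ : Finset (Fin n))).filter
            (fun I => i ∈ I ∧ j ∈ I) = ∅ := by
          rw [Finset.filter_eq_empty_iff]
          intro I hI hmem
          rw [Finset.mem_powersetCard] at hI
          have hsub : ({i, j} : Finset (Fin n)) ⊆ I := by
            rw [Finset.insert_subset_iff, Finset.singleton_subset_iff]
            exact hmem
          have := Finset.card_le_card hsub
          rw [Finset.card_pair hij, hI.2, hb1'] at this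
          omega
        rw [hempty]
        simp
  -- the key identity
  have hTkey : ∑ I ∈ Finset.powersetCard b (univ : Finset (Fin n)), ‖∑ i ∈ I, h i‖ ^ 2
      = (A - B) * ∑ i, ‖h i‖ ^ 2 := sum_over_batches h hsum0 A B hcard
  -- bound on H
  have hHbound : ∑ i, ‖h i‖ ^ 2 ≤ (n : ℝ) * (L ^ 2 * ‖x - x'‖ ^ 2) := by
    have h1 : ∑ i, ‖h i‖ ^ 2 ≤ ∑ i, ‖g i‖ ^ 2 := sum_sq_dev_le g
    have h2 : ∑ i, ‖g i‖ ^ 2 ≤ ∑ _i : Fin n, L ^ 2 * ‖x - x'‖ ^ 2 := by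
      refine Finset.sum_le_sum fun i _ => ?_
      have := hsmooth i x x'
      have h0 : (0:ℝ) ≤ ‖g i‖ := norm_nonneg _
      calc ‖g i‖ ^ 2 ≤ (L * ‖x - x'‖) ^ 2 := by
            apply pow_le_pow_left₀ h0 this
        _ = L ^ 2 * ‖x - x'‖ ^ 2 := by ring
    rw [Finset.sum_const, Finset.card_univ, Fintype.card_fin, nsmul_eq_mul] at h2
    linarith
  have hHpos : (0:ℝ) ≤ ∑ i, ‖h i‖ ^ 2 := by positivity
  have hBpos : (0:ℝ) ≤ B := by rw [hB]; split_ifs <;> positivity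
  -- choose identity: n * A = Nb * b
  set Nb : ℕ := (Finset.powersetCard b (Finset.univ : Finset (Fin n))).card with hNb
  have hNbval : Nb = n.choose b := by
    rw [hNb, Finset.card_powersetCard, Finset.card_univ, Fintype.card_fin]
  have hNbpos : 0 < Nb := by
    rw [hNbval]; exact Nat.choose_pos hbn
  have hchoose : (n : ℝ) * A = (Nb : ℝ) * b := by
    rw [hA, hNbval]
    have : n * (n-1).choose (b-1) = n.choose b * b := by
      have := Nat.add_one_mul_choose_eq (n-1) (b-1)
      have e1 : n - 1 + 1 = n := by omega
      have e2 : (b-1) + 1 = b := by omega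
      rw [e1] at this
      rw [e2] at this
      exact this
    exact_mod_cast this
  -- put it together
  rw [expSub]
  simp only [hgradavg]
  rw [Finset.sum_congr rfl hsummand, ← Finset.mul_sum, hTkey, ← hNb]
  rw [div_le_iff₀ (by exact_mod_cast hNbpos)]
  have hANb : A ≤ (Nb : ℝ) * b / n := by
    rw [le_div_iff₀ hnpos, mul_comm A]
    exact le_of_eq hchoose
  calc (b:ℝ)⁻¹ ^ 2 * ((A - B) * ∑ i, ‖h i‖ ^ 2)
      ≤ (b:ℝ)⁻¹ ^ 2 * (A * ((n:ℝ) * (L ^ 2 * ‖x - x'‖ ^ 2))) := by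
        apply mul_le_mul_of_nonneg_left _ (by positivity)
        have hApos : (0:ℝ) ≤ A := by rw [hA]; positivity
        have step1 : (A - B) * ∑ i, ‖h i‖ ^ 2 ≤ A * ∑ i, ‖h i‖ ^ 2 := by
          apply mul_le_mul_of_nonneg_right _ hHpos
          linarith
        have step2 : A * ∑ i, ‖h i‖ ^ 2 ≤ A * ((n:ℝ) * (L ^ 2 * ‖x - x'‖ ^ 2)) :=
          mul_le_mul_of_nonneg_left hHbound hApos
        linarith
    _ ≤ L ^ 2 / (b:ℝ) * ‖x - x'‖ ^ 2 * Nb := by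
        rw [show (b:ℝ)⁻¹ ^ 2 * (A * ((n:ℝ) * (L ^ 2 * ‖x - x'‖ ^ 2)))
            = ((n:ℝ) * A) * ((b:ℝ)⁻¹ ^ 2 * (L ^ 2 * ‖x - x'‖ ^ 2)) by ring, hchoose]
        rw [div_mul_eq_mul_div, div_mul_eq_mul_div, le_div_iff₀ hbpos]
        apply le_of_eq
        field_simp
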